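/- Let R be a commutative ring and m ≥ 3 an integer. Then the set {A ∈ M_m(R) | AB - BA ∈ N_m(R) for every B ∈ N_m(R)} is equal to B_m(R), the set of all upper triangular m × m matrices over R. -/

import Mathlib

/-- Membership in `N_m(R)`: upper triangular with all diagonal entries equal. -/
def memN {R : Type*} [CommRing R] {m : ℕ} (X : Matrix (Fin m) (Fin m) R) : Prop :=
  (∀ i j, j < i → X i j = 0) ∧ ∀ i j, X i i = X j j

/-- Membership in `B_m(R)`: upper triangular. -/
def memB {R : Type*} [CommRing R] {m : ℕ} (X : Matrix (Fin m) (Fin m) R) : Prop :=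
  ∀ i j, j < i → X i j = 0

/-- **Proposition (Itagaki–Nakamoto–Torii).**
For `m ≥ 3`, `{A ∈ M_m(R) | [A, B] ∈ N_m(R) for all B ∈ N_m(R)} = B_m(R)`. -/
theorem stmt_16 (R : Type*) [CommRing R] (m : ℕ) (hm : 3 ≤ m) :
    {A : Matrix (Fin m) (Fin m) R | ∀ B, memN B → memN (A * B - B * A)} =
      {A : Matrix (Fin m) (Fin m) R | memB A} := by
  ext A
  simp only [Set.mem_setOf_eq]
  constructor
  · intro h i j hji
    set B : Matrix (Fin m) (Fin m) R := Matrix.single j i (1 : R) with hBdef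
    have hij : j ≠ i := ne_of_lt hji
    have hB : memN B := by
      constructor
      · intro a b hba
        rw [hBdef, Matrix.single]
        simp only [Matrix.of_apply, ite_eq_right_iff, and_imp]
        rintro rfl rfl
        exact absurd hji (not_lt_of_gt hba)
      · intro a b
        have h1 : ∀ c : Fin m, B c c = 0 := by
          intro c
          rw [hBdef, Matrix.single]
          simp only [Matrix.of_apply, ite_eq_right_iff, and_imp]
          rintro rfl rfl
          exact absurd rfl hij
        rw [h1 a, h1 b]
    obtain ⟨r, hrj, hri⟩ : ∃ r : Fin m, r ≠ j ∧ r ≠ i := by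
      by_contra hc
      push_neg at hc
      have hsub : (Finset.univ : Finset (Fin m)) ⊆ {j, i} := by
        intro r _
        rcases eq_or_ne r j with rfl | hrj
        · simp
        · simp [hc r hrj]
      have := Finset.card_le_card hsub
      simp only [Finset.card_univ, Fintype.card_fin] at this
      have h2 : ({j, i} : Finset (Fin m)).card ≤ 2 :=
        (Finset.card_insert_le _ _).trans (by simp)
      omega
    have hdiag := (h B hB).2 j r
    have hjj : (A * B - B * A) j j = -A i j := by
      rw [Matrix.sub_apply, hBdef]
      rw [Matrix.mul_single_apply_of_ne (1:R) j i j j hij A,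
        Matrix.single_mul_apply_same (1:R) j i j A]
      ring
    have hrr : (A * B - B * A) r r = 0 := by
      rw [Matrix.sub_apply, hBdef]
      rw [Matrix.mul_single_apply_of_ne (1:R) j i r r hri A,
        Matrix.single_mul_apply_of_ne (1:R) j i r r hrj A]
      ring
    rw [hjj, hrr] at hdiag
    exact neg_eq_zero.mp hdiag
  · intro hA B hB
    constructor
    · intro i j hji
      rw [Matrix.sub_apply, Matrix.mul_apply, Matrix.mul_apply]
      rw [Finset.sum_eq_zero, Finset.sum_eq_zero, sub_zero]
      · intro k _
        rcases lt_or_ge k i with hk | hk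
        · rw [hB.1 i k hk, zero_mul]
        · rw [hA k j (lt_of_lt_of_le hji hk), mul_zero]
      · intro k _
        rcases lt_or_ge k i with hk | hk
        · rw [hA i k hk, zero_mul]
        · rw [hB.1 k j (lt_of_lt_of_le hji hk), mul_zero]
    · intro i j
      have key : ∀ c : Fin m, (A * B - B * A) c c = 0 := by
        intro c
        rw [Matrix.sub_apply, Matrix.mul_apply, Matrix.mul_apply]
        rw [Finset.sum_eq_single c, Finset.sum_eq_single c]
        · ring
        · intro k _ hk
          rcases lt_or_gt_of_ne hk with h' | h'
          · rw [hB.1 c k h', zero_mul]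
          · rw [hA k c h', mul_zero]
        · simp
        · intro k _ hk
          rcases lt_or_gt_of_ne hk with h' | h'
          · rw [hA c k h', zero_mul]
          · rw [hB.1 k c h', mul_zero]
        · simp
      rw [key i, key j]
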